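/- The Adjacent Hindman Theorem for a+2 colors implies that every sequence α : ℕ → Fin (a+2) has a highest letter occurring infinitely often: given α, define D : ℕ → Fin (a+2) on positive naturals by D(n) = max{α(k) : λ(n) ≤ k ≤ μ(n)}. If h is a strictly increasing apart sequence whose adjacent sums are all D-colored m, then m is a value of α attained infinitely often, and every value of α attained infinitely often is ≤ m. -/

import Mathlib

/-- λ(n): the 2-adic valuation of n (least exponent in binary expansion). -/
def lam (n : ℕ) : ℕ := padicValNat 2 n

/-- μ(n): ⌊log₂ n⌋ (greatest exponent in binary expansion). -/
def mu (n : ℕ) : ℕ := Nat.log 2 n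

/-- Apartness condition for a sequence. -/
def Apart (h : ℕ → ℕ) : Prop := ∀ i j, i < j → mu (h i) < lam (h j)

/-- Sum of adjacent elements h i + h (i+1) + ... + h j. -/
def adjSum (h : ℕ → ℕ) (i j : ℕ) : ℕ := ∑ t ∈ Finset.Icc i j, h t

lemma lam_le_mu {n : ℕ} (hn : 0 < n) : lam n ≤ mu n :=
  Nat.le_log_of_pow_le one_lt_two (Nat.le_of_dvd hn pow_padicValNat_dvd)

lemma pow_lam_dvd (n : ℕ) : 2 ^ lam n ∣ n := pow_padicValNat_dvd

lemma not_pow_lam_succ_dvd {n : ℕ} (hn : n ≠ 0) : ¬ 2 ^ (lam n + 1) ∣ n :=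
  pow_succ_padicValNat_not_dvd hn

lemma lam_eq_of {n v : ℕ} (h1 : 2 ^ v ∣ n) (h2 : ¬ 2 ^ (v + 1) ∣ n) : lam n = v := by
  have hn : n ≠ 0 := by rintro rfl; exact h2 (dvd_zero _)
  have hle : v ≤ lam n := by
    have := (padicValNat_dvd_iff (p := 2) v n).mp h1
    rcases this with h | h
    · exact absurd h hn
    · exact h
  have hlt : lam n < v + 1 := by
    by_contra hc
    push_neg at hc
    exact h2 ((pow_dvd_pow 2 hc).trans pow_padicValNat_dvd)
  omega

section main
variable {h : ℕ → ℕ} (hpos : ∀ i, 0 < h i) (hap : Apart h)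
include hpos hap

lemma adjSum_lt (i j : ℕ) (hij : i ≤ j) : adjSum h i j < 2 ^ (mu (h j) + 1) := by
  induction j, hij using Nat.le_induction with
  | base =>
    simp only [adjSum, Finset.Icc_self, Finset.sum_singleton]
    exact Nat.lt_pow_succ_log_self one_lt_two _
  | succ j hij ih =>
    have hsplit : adjSum h i (j + 1) = adjSum h i j + h (j + 1) := by
      rw [adjSum, adjSum, ← Finset.sum_Icc_succ_top (by omega)]
    have h1 : adjSum h i j < 2 ^ lam (h (j + 1)) := by
      calc adjSum h i j < 2 ^ (mu (h j) + 1) := ih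
        _ ≤ 2 ^ lam (h (j + 1)) :=
          Nat.pow_le_pow_right (by norm_num) (hap j (j + 1) (by omega))
    have hdvd : 2 ^ lam (h (j + 1)) ∣ h (j + 1) := pow_lam_dvd _
    have hlm : lam (h (j + 1)) ≤ mu (h (j + 1)) := lam_le_mu (hpos _)
    have h2 : h (j + 1) ≤ 2 ^ (mu (h (j + 1)) + 1) - 2 ^ lam (h (j + 1)) := by
      have hdvd2 : 2 ^ lam (h (j + 1)) ∣ 2 ^ (mu (h (j + 1)) + 1) - h (j + 1) :=
        Nat.dvd_sub (pow_dvd_pow 2 (by omega)) hdvd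
      have hlt : h (j + 1) < 2 ^ (mu (h (j + 1)) + 1) :=
        Nat.lt_pow_succ_log_self one_lt_two _
      have : 2 ^ lam (h (j + 1)) ≤ 2 ^ (mu (h (j + 1)) + 1) - h (j + 1) :=
        Nat.le_of_dvd (by omega) hdvd2
      omega
    have hp : (0:ℕ) < 2 ^ lam (h (j + 1)) := Nat.pow_pos (by norm_num)
    have hf : 2 ^ lam (h (j + 1)) ≤ 2 ^ (mu (h (j + 1)) + 1) :=
      Nat.pow_le_pow_right (by norm_num) (by omega)
    rw [hsplit]
    omega

lemma mu_adjSum (i j : ℕ) (hij : i ≤ j) : mu (adjSum h i j) = mu (h j) := by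
  apply Nat.log_eq_of_pow_le_of_lt_pow
  · calc 2 ^ mu (h j) ≤ h j := Nat.pow_log_le_self 2 (hpos j).ne'
      _ ≤ adjSum h i j := Finset.single_le_sum (f := h) (fun t _ => Nat.zero_le _)
        (Finset.mem_Icc.mpr ⟨hij, le_rfl⟩)
  · exact adjSum_lt hpos hap i j hij

lemma lam_adjSum (i j : ℕ) (hij : i ≤ j) : lam (adjSum h i j) = lam (h i) := by
  have hsplit : adjSum h i j = h i + ∑ t ∈ Finset.Icc (i + 1) j, h t := by
    rw [adjSum, Finset.Icc_eq_cons_Ioc hij, Finset.sum_cons, Finset.Icc_add_one_left_eq_Ioc]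
  have hrest : 2 ^ (mu (h i) + 1) ∣ ∑ t ∈ Finset.Icc (i + 1) j, h t := by
    apply Finset.dvd_sum
    intro t ht
    have hti : i < t := by have := Finset.mem_Icc.mp ht; omega
    have : mu (h i) + 1 ≤ lam (h t) := hap i t hti
    exact (pow_dvd_pow 2 this).trans (pow_lam_dvd _)
  have hlm : lam (h i) ≤ mu (h i) := lam_le_mu (hpos i)
  apply lam_eq_of
  · rw [hsplit]
    exact Nat.dvd_add (pow_lam_dvd _) ((pow_dvd_pow 2 (by omega)).trans hrest)
  · rw [hsplit]
    intro hdvd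
    have h2 : 2 ^ (lam (h i) + 1) ∣ ∑ t ∈ Finset.Icc (i + 1) j, h t :=
      (pow_dvd_pow 2 (by omega)).trans hrest
    rw [Nat.add_comm (h i)] at hdvd
    have : 2 ^ (lam (h i) + 1) ∣ h i := (Nat.dvd_add_right h2).mp hdvd
    exact not_pow_lam_succ_dvd (hpos i).ne' this

lemma lam_h_ge (i : ℕ) : i ≤ lam (h i) := by
  induction i with
  | zero => exact Nat.zero_le _
  | succ i ih =>
    have h1 : lam (h i) ≤ mu (h i) := lam_le_mu (hpos i)
    have h2 : mu (h i) < lam (h (i + 1)) := hap i (i + 1) (by omega)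
    omega

end main

theorem aht_gives_highest_letter (a : ℕ) (α : ℕ → Fin (a + 2))
    (D : ℕ → Fin (a + 2))
    (hD : ∀ n, D n = (Finset.Icc (lam n) (mu n)).sup α)
    (h : ℕ → ℕ) (hmono : StrictMono h) (hpos : ∀ i, 0 < h i) (hap : Apart h)
    (m : Fin (a + 2)) (hhom : ∀ i j, i ≤ j → D (adjSum h i j) = m) :
    {k | α k = m}.Infinite ∧ ∀ m' : Fin (a + 2), m < m' → {k | α k = m'}.Finite := by
  have key : ∀ i j, i ≤ j → (Finset.Icc (lam (h i)) (mu (h j))).sup α = m := by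
    intro i j hij
    have := hhom i j hij
    rw [hD, lam_adjSum hpos hap i j hij, mu_adjSum hpos hap i j hij] at this
    exact this
  constructor
  · apply Set.infinite_of_forall_exists_gt
    intro n
    have hne : (Finset.Icc (lam (h (n + 1))) (mu (h (n + 1)))).Nonempty :=
      Finset.nonempty_Icc.mpr (lam_le_mu (hpos _))
    obtain ⟨k, hk, hke⟩ := Finset.exists_mem_eq_sup _ hne α
    refine ⟨k, ?_, ?_⟩
    · exact Set.mem_setOf.mpr ((key (n + 1) (n + 1) le_rfl).symm.trans hke).symm
    · have := Finset.mem_Icc.mp hk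
      have := lam_h_ge hpos hap (n + 1)
      omega
  · intro m' hm'
    apply Set.Finite.subset (Set.finite_Iio (lam (h 0)))
    intro k hk
    simp only [Set.mem_setOf_eq] at hk
    by_contra hc
    simp only [Set.mem_Iio, not_lt] at hc
    have hkm : k ≤ mu (h k) := le_trans (lam_h_ge hpos hap k) (lam_le_mu (hpos k))
    have hmem : k ∈ Finset.Icc (lam (h 0)) (mu (h k)) := Finset.mem_Icc.mpr ⟨hc, hkm⟩
    have : α k ≤ m := (key 0 k (Nat.zero_le k)) ▸ Finset.le_sup hmem
    rw [hk] at this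
    exact absurd hm' (not_lt.mpr this)
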